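/- Let H_{R_1}, H_{R_2}, H_{R_3} be finite-dimensional complex Hilbert spaces and let {R^r}_{r=0}^{7} be positive semidefinite operators on H_{R_1}⊗H_{R_2}⊗H_{R_3} with Σ_{r=0}^{7} R^r = I. For i = 1, 2, 3 let σ_i be a density operator on ℂ²⊗H_{R_i}. Suppose that for every r ∈ {0,…,7}: 8·Tr_{R_1R_2R_3}[ (I_{(ℂ²)^{⊗3}} ⊗ R^r)(σ_1⊗σ_2⊗σ_3) ] = |GHZ^r⟩⟨GHZ^r|, where the tensor factors are reordered so that the three ℂ² factors come first and Tr_{R_1R_2R_3} is the partial trace over H_{R_1}⊗H_{R_2}⊗H_{R_3}. Then 2·Tr_{R_1}σ_1 = I_2, 2·Tr_{R_2}σ_2 = I_2, and 2·Tr_{R_3}σ_3 = I_2; in particular the Choi–Jamiołkowski maps associated with the operators 2σ_i are unital. -/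

import Mathlib

open scoped BigOperators ComplexOrder
open Matrix

noncomputable section

/-- The binary digits `k_1 … k_N` of `r` (most significant first). -/
def bits (N r : ℕ) : Fin N → Fin 2 :=
  fun i => ⟨r / 2 ^ (N - 1 - (i : ℕ)) % 2, Nat.mod_lt _ (by norm_num)⟩

/-- The tilted GHZ state with digit string `k`; at `θ = π/4` this is
`((-1)^{k_1+k_2+k_3}|k⟩ + |k̄⟩)/√2`. -/
def ghzVec (N : ℕ) (θ : ℝ) (k : Fin N → Fin 2) : (Fin N → Fin 2) → ℂ :=
  fun x =>
    (if x = k then ((-1 : ℂ) ^ (∑ i, (k i).val)) * (Real.cos θ : ℂ) else 0) +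
    (if x = (fun i => 1 - k i) then (Real.sin θ : ℂ) else 0)

/-- The tensor product `σ_1 ⊗ σ_2 ⊗ σ_3` of the three bipartite states, with tensor
factors reordered so that the three `ℂ²` factors come first. -/
def bigSigma {e : Fin 3 → ℕ}
    (σ : (i : Fin 3) → Matrix (Fin 2 × Fin (e i)) (Fin 2 × Fin (e i)) ℂ) :
    Matrix ((Fin 3 → Fin 2) × ((i : Fin 3) → Fin (e i)))
      ((Fin 3 → Fin 2) × ((i : Fin 3) → Fin (e i))) ℂ :=
  fun p q => ∏ i, σ i (p.1 i, p.2 i) (q.1 i, q.2 i)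

/-- `I ⊗ R` acting on `(ℂ²)^{⊗3} ⊗ (H_{R_1}⊗H_{R_2}⊗H_{R_3})`. -/
def idKronR {e : Fin 3 → ℕ}
    (R : Matrix ((i : Fin 3) → Fin (e i)) ((i : Fin 3) → Fin (e i)) ℂ) :
    Matrix ((Fin 3 → Fin 2) × ((i : Fin 3) → Fin (e i)))
      ((Fin 3 → Fin 2) × ((i : Fin 3) → Fin (e i))) ℂ :=
  fun p q => (if p.1 = q.1 then (1 : ℂ) else 0) * R p.2 q.2

lemma bits_bij : Function.Bijective (fun r : Fin 8 => bits 3 r) := by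
  rw [Fintype.bijective_iff_injective_and_card]
  exact ⟨by decide, by decide⟩

lemma star_ghz (θ : ℝ) (k : Fin 3 → Fin 2) (y : Fin 3 → Fin 2) :
    (star (ghzVec 3 θ k)) y = ghzVec 3 θ k y := by
  simp only [Pi.star_apply, ghzVec, star_add]
  congr 1 <;> split_ifs <;>
    simp only [star_zero, star_mul', Complex.star_def, map_pow, map_neg, _root_.map_one,
      Complex.conj_ofReal] <;> ring

lemma flip_flip' (k : Fin 3 → Fin 2) : (fun i => 1 - (fun j => 1 - k j) i) = k := by
  funext i
  have h : ∀ a : Fin 2, 1 - (1 - a) = a := by decide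
  exact h (k i)

lemma ne_flip (k : Fin 3 → Fin 2) : k ≠ (fun i => 1 - k i) := by
  intro hk
  have h1 := congrFun hk 0
  have h2 : ∀ a : Fin 2, a ≠ 1 - a := by decide
  exact h2 (k 0) h1

lemma sgn_flip (k : Fin 3 → Fin 2) :
    ((-1 : ℂ) ^ (∑ i : Fin 3, ((1 - k i : Fin 2)).val))
      = -((-1 : ℂ) ^ (∑ i, (k i).val)) := by
  have hsum : (∑ i, (k i).val) + (∑ i : Fin 3, ((1 - k i : Fin 2)).val) = 3 := by
    rw [← Finset.sum_add_distrib]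
    have h : ∀ a : Fin 2, a.val + (1 - a).val = 1 := by decide
    simp [h]
  have h1 : ((-1 : ℂ) ^ (∑ i, (k i).val)) * ((-1 : ℂ) ^ (∑ i : Fin 3, ((1 - k i : Fin 2)).val))
      = -1 := by
    rw [← pow_add, hsum]; norm_num
  have hs : ((-1 : ℂ) ^ (∑ i, (k i).val)) * ((-1 : ℂ) ^ (∑ i, (k i).val)) = 1 := by
    rw [← pow_add, ← two_mul, pow_mul]; norm_num
  calc ((-1 : ℂ) ^ (∑ i : Fin 3, ((1 - k i : Fin 2)).val))
      = ((-1 : ℂ) ^ (∑ i, (k i).val)) * ((-1 : ℂ) ^ (∑ i, (k i).val))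
          * ((-1 : ℂ) ^ (∑ i : Fin 3, ((1 - k i : Fin 2)).val)) := by rw [hs, one_mul]
    _ = -((-1 : ℂ) ^ (∑ i, (k i).val)) := by rw [mul_assoc, h1]; ring

lemma ghz_orth (x y : Fin 3 → Fin 2) :
    ∑ k : Fin 3 → Fin 2,
        ghzVec 3 (Real.pi / 4) k x * (star (ghzVec 3 (Real.pi / 4) k)) y
      = if x = y then 1 else 0 := by
  classical
  set θ := Real.pi / 4 with hθ
  have hzero : ∀ k : Fin 3 → Fin 2, k ≠ x → k ≠ (fun i => 1 - x i) →
      ghzVec 3 θ k x = 0 := by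
    intro k h1 h2
    have hx1 : x ≠ k := fun hh => h1 hh.symm
    have hx2 : x ≠ (fun i => 1 - k i) := by
      intro hh
      apply h2
      rw [hh]
      exact (flip_flip' k).symm ▸ (flip_flip' k)
    simp [ghzVec, hx1, hx2]
  have hsum : ∑ k : Fin 3 → Fin 2, ghzVec 3 θ k x * (star (ghzVec 3 θ k)) y
      = ghzVec 3 θ x x * (star (ghzVec 3 θ x)) y
        + ghzVec 3 θ (fun i => 1 - x i) x * (star (ghzVec 3 θ (fun i => 1 - x i))) y := by
    refine Finset.sum_eq_add_of_mem x (fun i => 1 - x i) (Finset.mem_univ _)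
      (Finset.mem_univ _) (ne_flip x) ?_
    intro c _ hc
    rw [hzero c hc.1 hc.2, zero_mul]
  rw [hsum, star_ghz, star_ghz]
  have g1 : ghzVec 3 θ x x = ((-1:ℂ)^(∑ i, (x i).val)) * (Real.cos θ : ℂ) := by
    simp [ghzVec, ne_flip x]
  have g2 : ghzVec 3 θ (fun i => 1 - x i) x = (Real.sin θ : ℂ) := by
    simp [ghzVec, flip_flip', ne_flip x]
  rw [g1, g2]
  by_cases hxy : x = y
  · subst hxy
    rw [g1, g2, if_pos rfl]
    have hs : ((-1:ℂ)^(∑ i, (x i).val)) * ((-1:ℂ)^(∑ i, (x i).val)) = 1 := by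
      rw [← pow_add, ← two_mul, pow_mul]; norm_num
    have : ((Real.cos θ : ℂ))^2 + ((Real.sin θ : ℂ))^2 = 1 := by
      norm_cast
      exact_mod_cast Real.cos_sq_add_sin_sq θ
    calc ((-1:ℂ)^(∑ i, (x i).val)) * (Real.cos θ : ℂ)
          * (((-1:ℂ)^(∑ i, (x i).val)) * (Real.cos θ : ℂ))
          + (Real.sin θ : ℂ) * (Real.sin θ : ℂ)
        = (((-1:ℂ)^(∑ i, (x i).val)) * ((-1:ℂ)^(∑ i, (x i).val)))
            * ((Real.cos θ : ℂ))^2 + ((Real.sin θ : ℂ))^2 := by ring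
      _ = 1 := by rw [hs, one_mul, this]
  · rw [if_neg hxy]
    have hyx : y ≠ x := fun hh => hxy hh.symm
    have g3 : ghzVec 3 θ x y = if y = (fun i => 1 - x i) then (Real.sin θ : ℂ) else 0 := by
      simp [ghzVec, hyx]
    have g4 : ghzVec 3 θ (fun i => 1 - x i) y
        = if y = (fun i => 1 - x i)
            then ((-1:ℂ)^(∑ i : Fin 3, ((1 - x i : Fin 2)).val)) * (Real.cos θ : ℂ) else 0 := by
      by_cases hy : y = (fun i => 1 - x i)
      · rw [if_pos hy]
        simp [ghzVec, hy, flip_flip', hyx]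
        intro hcontr
        exact absurd hcontr.symm (ne_flip x)
      · rw [if_neg hy]
        have hy2 : y ≠ (fun i => 1 - (fun j => 1 - x j) i) := by
          rw [flip_flip']; exact hyx
        simp [ghzVec, hy, hy2]
        intro hcontr
        exact absurd hcontr hyx
    rw [g3, g4]
    by_cases hy : y = (fun i => 1 - x i)
    · rw [if_pos hy, if_pos hy, sgn_flip]
      ring
    · rw [if_neg hy, if_neg hy]
      ring
/-- if `8·Tr_{R_1R_2R_3}[(I⊗R^r)(σ_1⊗σ_2⊗σ_3)] = |GHZ^r⟩⟨GHZ^r|` for all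
`r ∈ {0,…,7}`, then `2·Tr_{R_i} σ_i = I₂` for each `i`; in particular the
Choi–Jamiołkowski maps associated with the operators `2σ_i` are unital. -/
theorem stmt_18 (e : Fin 3 → ℕ)
    (R : Fin 8 → Matrix ((i : Fin 3) → Fin (e i)) ((i : Fin 3) → Fin (e i)) ℂ)
    (hRpsd : ∀ r, (R r).PosSemidef) (hRsum : ∑ r, R r = 1)
    (σ : (i : Fin 3) → Matrix (Fin 2 × Fin (e i)) (Fin 2 × Fin (e i)) ℂ)
    (hσpsd : ∀ i, (σ i).PosSemidef) (hσtr : ∀ i, (σ i).trace = 1)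
    (h : ∀ r : Fin 8,
      ((8 : ℂ) • fun x y => ∑ u, (idKronR (R r) * bigSigma σ) (x, u) (y, u)) =
        Matrix.vecMulVec (ghzVec 3 (Real.pi / 4) (bits 3 r))
          (star (ghzVec 3 (Real.pi / 4) (bits 3 r)))) :
    ∀ i : Fin 3,
      ((2 : ℂ) • fun x y => ∑ u, σ i (x, u) (y, u)) = (1 : Matrix (Fin 2) (Fin 2) ℂ) := by
  classical
  have hmat : ∑ r, idKronR (R r) * bigSigma σ = bigSigma σ := by
    rw [← Matrix.sum_mul]
    have hid : (∑ r, idKronR (R r)) = (1 : Matrix _ _ ℂ) := by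
      ext p q
      rw [Matrix.sum_apply]
      simp only [idKronR]
      rw [← Finset.mul_sum]
      have h3 : ∑ r, R r p.2 q.2 = (1 : Matrix _ _ ℂ) p.2 q.2 := by
        rw [← Matrix.sum_apply p.2 q.2 Finset.univ (fun r => R r)] at *
        rw [hRsum]
      rw [h3, Matrix.one_apply, Matrix.one_apply]
      by_cases h1 : p = q
      · subst h1; simp
      · rcases Prod.ext_iff.not.mp h1 with _
        by_cases h2 : p.1 = q.1
        · have h4 : ¬ p.2 = q.2 := fun hc => h1 (Prod.ext h2 hc)
          simp [h2, h4, h1]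
        · simp [h2, h1]
    rw [hid, Matrix.one_mul]
  have key1 : ∀ x y : Fin 3 → Fin 2,
      (8 : ℂ) * ∏ i, (∑ u, σ i (x i, u) (y i, u)) = if x = y then 1 else 0 := by
    intro x y
    have hA : ∀ r : Fin 8,
        (8 : ℂ) * (∑ u, (idKronR (R r) * bigSigma σ) (x, u) (y, u))
          = ghzVec 3 (Real.pi / 4) (bits 3 r) x
              * (star (ghzVec 3 (Real.pi / 4) (bits 3 r))) y := by
      intro r
      have hc := congrFun (congrFun (h r) x) y
      simpa [Matrix.smul_apply, Matrix.vecMulVec_apply, smul_eq_mul] using hc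
    have hrhs : ∑ r : Fin 8, ghzVec 3 (Real.pi / 4) (bits 3 r) x
        * (star (ghzVec 3 (Real.pi / 4) (bits 3 r))) y = if x = y then 1 else 0 := by
      rw [← ghz_orth x y]
      exact bits_bij.sum_comp
        (fun k => ghzVec 3 (Real.pi / 4) k x * (star (ghzVec 3 (Real.pi / 4) k)) y)
    have hlhs : ∑ r : Fin 8, (8 : ℂ) * (∑ u, (idKronR (R r) * bigSigma σ) (x, u) (y, u))
        = (8 : ℂ) * ∏ i, (∑ u, σ i (x i, u) (y i, u)) := by
      rw [← Finset.mul_sum]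
      congr 1
      rw [Finset.sum_comm]
      have hstep : ∀ u, (∑ r : Fin 8, (idKronR (R r) * bigSigma σ) (x, u) (y, u))
          = ∏ i, σ i (x i, u i) (y i, u i) := by
        intro u
        rw [← Matrix.sum_apply (x, u) (y, u) Finset.univ
          (fun r => idKronR (R r) * bigSigma σ), hmat]
        rfl
      rw [Finset.sum_congr rfl (fun u _ => hstep u)]
      exact (Fintype.prod_sum (fun i a => σ i (x i, a) (y i, a))).symm
    rw [← hlhs, Finset.sum_congr rfl (fun r _ => hA r), hrhs]
  have key2 : ∀ i : Fin 3, ∑ a : Fin 2, (∑ u, σ i (a, u) (a, u)) = 1 := by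
    intro i
    have ht := hσtr i
    simpa [Matrix.trace, Matrix.diag, Fintype.sum_prod_type] using ht
  intro j
  ext x y
  change (2 : ℂ) * (∑ u, σ j (x, u) (y, u)) = (1 : Matrix (Fin 2) (Fin 2) ℂ) x y
  rw [Matrix.one_apply]
  have hcard : Fintype.card (Fin 3 → Fin 2) = 8 := by simp
  have hcond : ∀ w : Fin 3 → Fin 2,
      ((fun i => if i = j then x else w i) = (fun i => if i = j then y else w i)) ↔ x = y := by
    intro w
    constructor
    · intro hh
      have := congrFun hh j
      simpa using this
    · intro hh; subst hh; rfl
  have hsum1 : ∑ w : Fin 3 → Fin 2,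
      ((8 : ℂ) * ∏ i, (∑ u, σ i ((if i = j then x else w i), u) ((if i = j then y else w i), u)))
      = (8 : ℂ) * (if x = y then 1 else 0) := by
    have : ∀ w : Fin 3 → Fin 2,
        ((8 : ℂ) * ∏ i, (∑ u, σ i ((if i = j then x else w i), u) ((if i = j then y else w i), u)))
          = if x = y then 1 else 0 := by
      intro w
      rw [key1 (fun i => if i = j then x else w i) (fun i => if i = j then y else w i)]
      by_cases hxy : x = y
      · rw [if_pos ((hcond w).mpr hxy), if_pos hxy]
      · rw [if_neg (fun hc => hxy ((hcond w).mp hc)), if_neg hxy]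
    rw [Finset.sum_congr rfl (fun w _ => this w), Finset.sum_const, Finset.card_univ, hcard,
      nsmul_eq_mul]
    norm_num
  have hsum2 : ∑ w : Fin 3 → Fin 2,
      ((8 : ℂ) * ∏ i, (∑ u, σ i ((if i = j then x else w i), u) ((if i = j then y else w i), u)))
      = (8 : ℂ) * ((2 : ℂ) * ∑ u, σ j (x, u) (y, u)) := by
    rw [← Finset.mul_sum]
    congr 1
    rw [← Fintype.prod_sum (fun i a => ∑ u, σ i ((if i = j then x else a), u) ((if i = j then y else a), u))]
    rw [Finset.prod_eq_single j]
    · have hconst : ∀ a : Fin 2,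
          (∑ u, σ j ((if j = j then x else a), u) ((if j = j then y else a), u))
            = ∑ u, σ j (x, u) (y, u) := by
        intro a
        simp
      rw [Finset.sum_congr rfl (fun a _ => hconst a), Finset.sum_const, Finset.card_univ,
        Fintype.card_fin, nsmul_eq_mul]
      norm_num
    · intro i _ hij
      simp only [if_neg hij]
      exact key2 i
    · intro hj
      exact absurd (Finset.mem_univ j) hj
  have := hsum2.symm.trans hsum1
  exact mul_left_cancel₀ (by norm_num : (8 : ℂ) ≠ 0) this

end
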